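/- arXiv:2112.01623 — 3 statements merged into one kernel-verified Lean document; each statement's English description precedes it below -/
import Mathlib

section
/- Let θ ∈ ℝ³ with 0 < ‖θ‖ < π, and let α = (2 tan(‖θ‖/2)/‖θ‖) θ be the associated rescaled-Rodrigues vector. Then the matrix exponential of the cross-product matrix of θ equals the rescaled-Rodrigues matrix of α: exp(S(θ)) = I + (4/(4+‖α‖²))(S(α) + (1/2)S(α)²). -/
open Matrix

noncomputable section

/-- Vectors in ℝ³ with the Euclidean norm. -/
abbrev V3 : Type := EuclideanSpace ℝ (Fin 3)

/-- 3×3 real matrices. -/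
abbrev M3 : Type := Matrix (Fin 3) (Fin 3) ℝ

/-- Cross-product (skew-symmetric) matrix of a vector: `S a *ᵥ v = a ×₃ v`. -/
def S (a : V3) : M3 := !![0, -a 2, a 1; a 2, 0, -a 0; -a 1, a 0, 0]

/-- Rescaled-Rodrigues rotation matrix `R(α) = I + (4/(4+‖α‖²))(S(α) + (1/2)S(α)²)`. -/
def Rot (α : V3) : M3 := 1 + (4 / (4 + ‖α‖ ^ 2)) • (S α + (1 / 2 : ℝ) • (S α * S α))

/-- Action of a matrix on a vector. -/
def mulV (A : M3) (v : V3) : V3 := WithLp.toLp 2 (A.mulVec v)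

lemma norm_sq_eq' (θ : V3) : ‖θ‖ ^ 2 = θ 0 ^ 2 + θ 1 ^ 2 + θ 2 ^ 2 := by
  rw [EuclideanSpace.norm_eq, Real.sq_sqrt (by positivity)]
  simp [Fin.sum_univ_three, Real.norm_eq_abs, sq_abs]

lemma S_smul' (c : ℝ) (x : V3) : S (c • x) = c • S x := by
  ext i j
  fin_cases i <;> fin_cases j <;>
    simp [S, PiLp.smul_apply, smul_eq_mul]

lemma S_cube' (θ : V3) : S θ * S θ * S θ = (-(‖θ‖ ^ 2)) • S θ := by
  rw [norm_sq_eq' θ]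
  ext i j
  fin_cases i <;> fin_cases j <;>
    · simp [S, Matrix.mul_apply, Fin.sum_univ_three, Matrix.smul_apply, smul_eq_mul]
      ring

lemma fact_ne' (n : ℕ) : ((n.factorial : ℕ) : ℝ) ≠ 0 := by
  exact_mod_cast (Nat.factorial_ne_zero n)

lemma exp_of_cube' {A : M3} {t : ℝ} (ht : t ≠ 0) (hA : A * A * A = (-(t ^ 2)) • A) :
    NormedSpace.exp A =
      1 + (Real.sin t / t) • A + ((1 - Real.cos t) / t ^ 2) • (A * A) := by
  have hodd : ∀ k : ℕ, A ^ (2 * k + 1) = ((-(t ^ 2)) ^ k) • A := by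
    intro k
    induction k with
    | zero => simp
    | succ k ih =>
      rw [show 2 * (k + 1) + 1 = (2 * k + 1) + 2 by ring, pow_add, ih,
        smul_mul_assoc, show A * A ^ 2 = A * A * A by rw [pow_two, mul_assoc],
        hA, smul_smul, ← pow_succ]
  have heven : ∀ k : ℕ, A ^ (2 * k + 2) = ((-(t ^ 2)) ^ k) • (A * A) := by
    intro k
    rw [show 2 * k + 2 = (2 * k + 1) + 1 by ring, pow_succ, hodd, smul_mul_assoc]
  have hnegpow : ∀ k : ℕ, (-(t ^ 2)) ^ k = (-1) ^ k * t ^ (2 * k) := by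
    intro k
    rw [neg_pow, pow_mul]
  set f : ℕ → M3 := fun n => ((n.factorial : ℝ))⁻¹ • A ^ n with hf
  have he : HasSum (fun k => f (2 * k + 1)) ((Real.sin t / t) • A) := by
    have h := ((Real.hasSum_sin t).div_const t).smul_const A
    convert h using 2 with k
    rw [hf]
    simp only
    rw [hodd, smul_smul, hnegpow]
    congr 1
    rw [pow_succ]
    field_simp [fact_ne']
  have ho : HasSum (fun k => f (2 * k + 2)) (((1 - Real.cos t) / t ^ 2) • (A * A)) := by
    have hcos := Real.hasSum_cos t
    have h1 := (hasSum_nat_add_iff'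
      (f := fun n : ℕ => (-1 : ℝ) ^ n * t ^ (2 * n) / (2 * n).factorial) 1).mpr hcos
    simp only [Finset.range_one, Finset.sum_singleton, pow_zero, mul_zero, one_mul,
      Nat.factorial_zero, Nat.cast_one, div_one] at h1
    have h2 := h1.neg
    rw [neg_sub] at h2
    have h3 := (h2.div_const (t ^ 2)).smul_const (A * A)
    convert h3 using 2 with k
    rw [hf]
    simp only
    rw [heven, smul_smul, hnegpow]
    congr 1
    rw [show 2 * (k + 1) = 2 * k + 2 by ring]
    rw [show (2 * k + 2 : ℕ) = 2 * k + 2 by ring]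
    field_simp [fact_ne']
    ring
  have hF : HasSum (fun n => f (n + 1))
      ((Real.sin t / t) • A + ((1 - Real.cos t) / t ^ 2) • (A * A)) := by
    refine HasSum.even_add_odd ?_ ?_
    · convert he using 2
    · convert ho using 2
  have hfull := (hasSum_nat_add_iff (f := f) 1).mp hF
  simp only [Finset.range_one, Finset.sum_singleton] at hfull
  have hf0 : f 0 = 1 := by simp [hf]
  rw [hf0] at hfull
  rw [NormedSpace.exp_eq_tsum (𝕂 := ℝ)]
  exact hfull.tsum_eq.trans (by abel)

/-- For 0 < ‖θ‖ < π and α = (2 tan(‖θ‖/2)/‖θ‖) θ, the matrix exponential of S(θ)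
equals the rescaled-Rodrigues matrix of α. -/
theorem stmt3 (θ : V3) (h0 : 0 < ‖θ‖) (hπ : ‖θ‖ < Real.pi)
    (α : V3) (hα : α = ((2 * Real.tan (‖θ‖ / 2)) / ‖θ‖) • θ) :
    NormedSpace.exp (S θ) = Rot α := by
  have hexp := exp_of_cube' (ne_of_gt h0) (S_cube' θ)
  set t := ‖θ‖ with htdef
  have ht : t ≠ 0 := ne_of_gt h0
  set c : ℝ := 2 * Real.tan (t / 2) / t with hcdef
  have hSα : S α = c • S θ := by rw [hα, S_smul']
  have hα2 : ‖α‖ ^ 2 = c ^ 2 * t ^ 2 := by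
    rw [hα, norm_smul, Real.norm_eq_abs, mul_pow, sq_abs]
  set s := Real.sin (t / 2) with hsdef
  set co := Real.cos (t / 2) with hcodef
  have hcopos : 0 < co := Real.cos_pos_of_mem_Ioo
    (Set.mem_Ioo.mpr ⟨by linarith [Real.pi_pos], by linarith⟩)
  have hco : co ≠ 0 := ne_of_gt hcopos
  have hsc : s ^ 2 + co ^ 2 = 1 := Real.sin_sq_add_cos_sq _
  have htan : Real.tan (t / 2) = s / co := Real.tan_eq_sin_div_cos _
  have hsin : Real.sin t = 2 * s * co := by
    rw [hsdef, hcodef, ← Real.sin_two_mul]; congr 1; ring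
  have hcos : Real.cos t = 2 * co ^ 2 - 1 := by
    rw [hcodef, ← Real.cos_two_mul]; congr 1; ring
  have hmain : 4 / (4 + c ^ 2 * t ^ 2) = co ^ 2 := by
    rw [hcdef, htan]
    rw [show (2 * (s / co) / t) ^ 2 * t ^ 2 = 4 * s ^ 2 / co ^ 2 by
      field_simp; ring]
    rw [show (4 : ℝ) + 4 * s ^ 2 / co ^ 2 = 4 / co ^ 2 by
      field_simp; linear_combination hsc]
    field_simp
  rw [hexp, Rot, hSα, hα2, hmain]
  have expand : (co ^ 2) • ((c • S θ) + (1 / 2 : ℝ) • ((c • S θ) * (c • S θ))) =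
      (co ^ 2 * c) • S θ + (co ^ 2 * (1 / 2 * (c * c))) • (S θ * S θ) := by
    rw [smul_mul_smul_comm, smul_add, smul_smul, smul_smul, smul_smul]; ring_nf
  rw [expand]
  have e1 : co ^ 2 * c = Real.sin t / t := by
    rw [hcdef, htan, hsin]; field_simp
  have e2 : co ^ 2 * (1 / 2 * (c * c)) = (1 - Real.cos t) / t ^ 2 := by
    rw [hcdef, htan, hcos]; field_simp; linear_combination 2 * hsc
  rw [e1, e2, add_assoc]
end
end

section
/- Fix b₀, b₁ ∈ ℝ³. As h → 0, the incremental rescaled-Rodrigues update satisfies the second-order expansion: the function h ↦ (2h/(1 + √(1 − h²‖b₀ + h b₁‖²))) (b₀ + h b₁) − (h b₀ + h² b₁) is O(h³) as h → 0 (in the sense of asymptotic big-O at 0). -/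
open Matrix

noncomputable section

open Asymptotics

/-- Second-order expansion of the incremental rescaled-Rodrigues update:
(2h/(1+√(1−h²‖b₀+h b₁‖²)))(b₀ + h b₁) − (h b₀ + h² b₁) = O(h³) as h → 0. -/
theorem stmt10 (b₀ b₁ : V3) :
    (fun h : ℝ =>
        (2 * h / (1 + Real.sqrt (1 - h ^ 2 * ‖b₀ + h • b₁‖ ^ 2))) • (b₀ + h • b₁)
          - (h • b₀ + h ^ 2 • b₁)) =O[nhds 0] fun h : ℝ => h ^ 3 := by
  set N : ℝ := ‖b₀‖ + ‖b₁‖ + 1 with hNdef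
  have hN1 : (1:ℝ) ≤ N := by
    have := norm_nonneg b₀; have := norm_nonneg b₁; simp [hNdef]; linarith
  have hNpos : (0:ℝ) < N := by linarith
  rw [isBigO_iff]
  refine ⟨N ^ 3, ?_⟩
  have hmem : Set.Ioo (-(1/N)) (1/N) ∈ nhds (0:ℝ) :=
    Ioo_mem_nhds (neg_neg_iff_pos.mpr (by positivity)) (by positivity)
  filter_upwards [hmem] with h hh
  have habs : |h| ≤ 1 / N := le_of_lt (abs_lt.mpr ⟨hh.1, hh.2⟩)
  have h1 : |h| ≤ 1 := habs.trans (by rw [div_le_one hNpos]; exact hN1)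
  set v : V3 := b₀ + h • b₁ with hv
  have hvN : ‖v‖ ≤ N := by
    calc ‖v‖ ≤ ‖b₀‖ + ‖h • b₁‖ := norm_add_le _ _
    _ = ‖b₀‖ + |h| * ‖b₁‖ := by rw [norm_smul, Real.norm_eq_abs]
    _ ≤ ‖b₀‖ + 1 * ‖b₁‖ := by
        have := norm_nonneg b₁; nlinarith
    _ ≤ N := by simp [hNdef]
  have hg : h ^ 2 * ‖v‖ ^ 2 ≤ 1 := by
    have h2 : h ^ 2 ≤ (1/N)^2 := by
      rw [← sq_abs]; exact pow_le_pow_left₀ (abs_nonneg h) habs 2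
    have h3 : ‖v‖ ^ 2 ≤ N ^ 2 := pow_le_pow_left₀ (norm_nonneg v) hvN 2
    calc h ^ 2 * ‖v‖ ^ 2 ≤ (1/N)^2 * N^2 :=
          mul_le_mul h2 h3 (sq_nonneg _) (by positivity)
      _ = 1 := by field_simp
  set s : ℝ := Real.sqrt (1 - h ^ 2 * ‖v‖ ^ 2) with hs
  have hs0 : 0 ≤ s := Real.sqrt_nonneg _
  have hs2 : s ^ 2 = 1 - h ^ 2 * ‖v‖ ^ 2 := Real.sq_sqrt (by linarith)
  have h1s : (0:ℝ) < 1 + s := by linarith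
  have key : 2 * h / (1 + s) - h = h ^ 3 * ‖v‖ ^ 2 / (1 + s) ^ 2 := by
    field_simp
    linear_combination (-h) * hs2
  have hfeq : (2 * h / (1 + s)) • v - (h • b₀ + h ^ 2 • b₁)
      = (h ^ 3 * ‖v‖ ^ 2 / (1 + s) ^ 2) • v := by
    have : h • b₀ + h ^ 2 • b₁ = h • v := by
      rw [hv, smul_add, smul_smul]; ring_nf
    rw [this, ← sub_smul, key]
  rw [hfeq]
  rw [norm_smul, Real.norm_eq_abs, Real.norm_eq_abs]
  have hceq : |h ^ 3 * ‖v‖ ^ 2 / (1 + s) ^ 2| ≤ |h ^ 3| * N ^ 2 := by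
    rw [abs_div, abs_mul, abs_of_nonneg (sq_nonneg ‖v‖), abs_of_nonneg (sq_nonneg (1+s))]
    have h1s2 : (1:ℝ) ≤ (1 + s) ^ 2 := by nlinarith
    have : ‖v‖ ^ 2 ≤ N ^ 2 := pow_le_pow_left₀ (norm_nonneg v) hvN 2
    calc |h ^ 3| * ‖v‖ ^ 2 / (1 + s) ^ 2 ≤ |h ^ 3| * ‖v‖ ^ 2 / 1 := by
          apply div_le_div_of_nonneg_left _ one_pos h1s2
          positivity
      _ = |h ^ 3| * ‖v‖ ^ 2 := by ring
      _ ≤ |h ^ 3| * N ^ 2 := by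
          apply mul_le_mul_of_nonneg_left this (abs_nonneg _)
  calc |h ^ 3 * ‖v‖ ^ 2 / (1 + s) ^ 2| * ‖v‖ ≤ (|h ^ 3| * N ^ 2) * N := by
        apply mul_le_mul hceq hvN (norm_nonneg v) (by positivity)
    _ = N ^ 3 * |h ^ 3| := by ring
end
end

section
/- Consider the three-dimensional pendulum: let m, g, J > 0, let ρ₀ ∈ ℝ³ and e₃ = (0,0,1), and let R : ℝ → M₃(ℝ) and Ω : ℝ → ℝ³ be differentiable functions satisfying the equations of motion R′(t) = S(Ω(t)) R(t) and J Ω′(t) = m g (R(t) ρ₀) × e₃ for all t. Then the quantity (R(t) ρ₀) · Ω(t) is constant in t. -/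
open Matrix

noncomputable section

attribute [local instance] Matrix.normedAddCommGroup Matrix.normedSpace

lemma S_mulVec (a v : V3) : (S a).mulVec v = crossProduct a v := by
  funext i
  fin_cases i <;>
    simp [S, crossProduct, Matrix.mulVec, dotProduct, Fin.sum_univ_three, Matrix.vecHead, Matrix.vecTail] <;> ring

lemma inner_eq_dot (u v : V3) : (inner ℝ u v : ℝ) = u ⬝ᵥ v := by
  simp [PiLp.inner_apply, dotProduct, mul_comm]

/-- For the three-dimensional pendulum, (R(t) ρ₀) · Ω(t) is a constant of the
motion along solutions of R′ = S(Ω) R, J Ω′ = m g (R ρ₀) × e₃. -/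
theorem stmt15 (m g J : ℝ) (hm : 0 < m) (hg : 0 < g) (hJ : 0 < J)
    (ρ₀ : V3) (e₃ : V3) (he₃ : e₃ = WithLp.toLp 2 ![0, 0, 1])
    (R : ℝ → M3) (Ω : ℝ → V3) (hR : Differentiable ℝ R) (hΩ : Differentiable ℝ Ω)
    (heq1 : ∀ t, deriv R t = S (Ω t) * R t)
    (heq2 : ∀ t, J • deriv Ω t = (m * g) • crossProduct (mulV (R t) ρ₀) e₃) :
    ∀ t₁ t₂ : ℝ, mulV (R t₁) ρ₀ ⬝ᵥ Ω t₁ = mulV (R t₂) ρ₀ ⬝ᵥ Ω t₂ := by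
  -- the linear map A ↦ A *ᵥ ρ₀ as a continuous linear map
  let L : M3 →L[ℝ] V3 :=
    LinearMap.toContinuousLinearMap
      { toFun := fun A : M3 => (WithLp.toLp 2 (A.mulVec ρ₀) : V3)
        map_add' := fun A B => by simp [Matrix.add_mulVec]
        map_smul' := fun c A => by simp [Matrix.smul_mulVec] }
  have hL : ∀ A : M3, L A = WithLp.toLp 2 (A.mulVec ρ₀) := fun A => rfl
  have key : ∀ t, HasDerivAt (fun t => (inner ℝ (L (R t)) (Ω t) : ℝ)) 0 t := by
    intro t
    have hRd : HasDerivAt R (S (Ω t) * R t) t := by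
      have := (hR t).hasDerivAt
      rw [← heq1 t]; exact this
    have hud : HasDerivAt (fun s => L (R s)) (L (S (Ω t) * R t)) t :=
      L.hasFDerivAt.comp_hasDerivAt t hRd
    have hΩd : HasDerivAt Ω ((m * g / J) • WithLp.toLp 2 (crossProduct (mulV (R t) ρ₀) e₃)) t := by
      have hd := (hΩ t).hasDerivAt
      have : deriv Ω t = (m * g / J) • crossProduct (mulV (R t) ρ₀) e₃ := by
        have h2 := heq2 t
        have : deriv Ω t = (1 / J) • ((m * g) • crossProduct (mulV (R t) ρ₀) e₃) := by
          rw [← h2, smul_smul, one_div, inv_mul_cancel₀ hJ.ne', one_smul]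
        rw [this, smul_smul]; ring_nf
      have e : deriv Ω t = (m * g / J) • WithLp.toLp 2 (crossProduct (mulV (R t) ρ₀) e₃) := by
        rw [← WithLp.toLp_smul, ← this]
      rwa [e] at hd
    have := hud.inner ℝ hΩd
    have h1 : (inner ℝ (L (R t)) ((m * g / J) • WithLp.toLp 2 (crossProduct (mulV (R t) ρ₀) e₃)) : ℝ) = 0 := by
      rw [inner_smul_right, inner_eq_dot, hL, WithLp.ofLp_toLp, WithLp.ofLp_toLp]
      have : (R t).mulVec ρ₀ ⬝ᵥ crossProduct (mulV (R t) ρ₀) e₃ = 0 := by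
        simpa [mulV] using dot_self_cross ((R t).mulVec ρ₀) e₃
      rw [this, mul_zero]
    have h2 : (inner ℝ (L (S (Ω t) * R t)) (Ω t) : ℝ) = 0 := by
      rw [inner_eq_dot, hL, WithLp.ofLp_toLp]
      have : (S (Ω t) * R t).mulVec ρ₀ = crossProduct (Ω t) ((R t).mulVec ρ₀) := by
        rw [← Matrix.mulVec_mulVec, ← WithLp.ofLp_toLp (x := (R t).mulVec ρ₀) (p := 2), S_mulVec]
      rw [this]
      rw [dotProduct_comm]
      exact dot_self_cross (Ω t) ((R t).mulVec ρ₀)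
    exact this.congr_deriv (by rw [h1, h2, add_zero])
  intro t₁ t₂
  have hconst : (fun t => (inner ℝ (L (R t)) (Ω t) : ℝ)) t₁ =
      (fun t => (inner ℝ (L (R t)) (Ω t) : ℝ)) t₂ :=
    is_const_of_deriv_eq_zero (fun t => (key t).differentiableAt)
      (fun t => (key t).deriv) t₁ t₂
  simpa [hL, inner_eq_dot, mulV, dotProduct, Fin.sum_univ_three] using hconst
end
end
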